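/- Let A be an idempotented algebra and e ∈ A a left special idempotent. Then Ae is flat as a right eAe-module. -/

import Mathlib

open scoped TensorProduct

set_option linter.unusedSectionVars false

universe u

section Setup

variable (K : Type u) [CommRing K]
variable (A : Type u) [NonUnitalRing A] [Module K A]
  [SMulCommClass K A A] [IsScalarTower K A A]

/-- A (not necessarily non-degenerate) left module over the non-unital `K`-algebra `A`:
an abelian group with compatible `K`- and `A`-actions, the `A`-action being `K`-bilinear. -/
class NUMod (M : Type u) [AddCommGroup M] [Module K M] extends SMul A M where
  asmul_add : ∀ (a : A) (m n : M), a • (m + n) = a • m + a • n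
  add_asmul : ∀ (a b : A) (m : M), (a + b) • m = a • m + b • m
  mul_asmul : ∀ (a b : A) (m : M), (a * b) • m = a • (b • m)
  asmul_ksmul : ∀ (k : K) (a : A) (m : M), a • (k • m) = k • (a • m)
  ksmul_asmul : ∀ (k : K) (a : A) (m : M), (k • a) • m = k • (a • m)

/-- `A` is an idempotented algebra. -/
def Idempotented : Prop :=
  (∀ a : A, ∃ e : A, e * e = e ∧ e * a = a ∧ a * e = a) ∧
  ∀ e₁ e₂ : A, e₁ * e₁ = e₁ → e₂ * e₂ = e₂ →
    ∃ e : A, e * e = e ∧ e * e₁ = e₁ ∧ e₁ * e = e₁ ∧ e * e₂ = e₂ ∧ e₂ * e = e₂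

/-- A module is non-degenerate if every element is fixed by some idempotent of `A`. -/
def Nondeg (M : Type u) [AddCommGroup M] [Module K M] [NUMod K A M] : Prop :=
  ∀ m : M, ∃ e : A, e * e = e ∧ e • m = m

/-- A `K`-submodule which is stable under the `A`-action, i.e. an `A`-submodule. -/
def AStable {M : Type u} [AddCommGroup M] [Module K M] [NUMod K A M]
    (S : Submodule K M) : Prop :=
  ∀ a : A, ∀ m ∈ S, a • m ∈ S

/-- `A`-linearity of a `K`-linear map between `A`-modules. -/
def IsAMap {M N : Type u} [AddCommGroup M] [Module K M] [NUMod K A M]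
    [AddCommGroup N] [Module K N] [NUMod K A N] (f : M →ₗ[K] N) : Prop :=
  ∀ (a : A) (m : M), f (a • m) = a • f m

theorem asmul_zero {M : Type u} [AddCommGroup M] [Module K M] [NUMod K A M] (a : A) :
    a • (0 : M) = 0 := by
  have h := NUMod.asmul_add (K := K) (A := A) a (0 : M) 0
  rw [add_zero] at h
  exact add_left_cancel (show a • (0 : M) + a • (0 : M) = a • (0 : M) + 0 by
    rw [add_zero]; exact h.symm)

variable {A}

/-- The subset `eM = {e m : m ∈ M}` of a module `M`, as a `K`-submodule. -/
def eSub (e : A) (M : Type u) [AddCommGroup M] [Module K M] [NUMod K A M] :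
    Submodule K M where
  carrier := {m : M | ∃ n : M, e • n = m}
  zero_mem' := ⟨0, asmul_zero K A e⟩
  add_mem' := by
    rintro x y ⟨m, rfl⟩ ⟨n, rfl⟩
    exact ⟨m + n, NUMod.asmul_add e m n⟩
  smul_mem' := by
    rintro k x ⟨m, rfl⟩
    exact ⟨k • m, NUMod.asmul_ksmul k e m⟩

/-- The submodule `AeM` of `M` generated by the elements `a • (e • m)`. -/
def aeSpan (e : A) (M : Type u) [AddCommGroup M] [Module K M] [NUMod K A M] :
    Submodule K M :=
  Submodule.span K {x : M | ∃ (a : A) (m : M), a • (e • m) = x}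

/-- The left ideal `Ae = {a e : a ∈ A}` (for an idempotent `e`), as a `K`-submodule of `A`. -/
def leftIdeal (e : A) : Submodule K A where
  carrier := {x : A | ∃ a : A, a * e = x}
  zero_mem' := ⟨0, zero_mul e⟩
  add_mem' := by
    rintro x y ⟨a, rfl⟩ ⟨b, rfl⟩
    exact ⟨a + b, add_mul a b e⟩
  smul_mem' := by
    rintro k x ⟨a, rfl⟩
    exact ⟨k • a, smul_mul_assoc k a e⟩

/-- The right ideal `eA = {e a : a ∈ A}` (for an idempotent `e`), as a `K`-submodule of `A`. -/
def rightIdeal (e : A) : Submodule K A where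
  carrier := {x : A | ∃ a : A, e * a = x}
  zero_mem' := ⟨0, mul_zero e⟩
  add_mem' := by
    rintro x y ⟨a, rfl⟩ ⟨b, rfl⟩
    exact ⟨a + b, mul_add e a b⟩
  smul_mem' := by
    rintro k x ⟨a, rfl⟩
    exact ⟨k • a, mul_smul_comm k e a⟩

/-- The `A`-balancing relations inside `eA ⊗_K M`, whose quotient is `eA ⊗_A M`. -/
def brel (e : A) (M : Type u) [AddCommGroup M] [Module K M] [NUMod K A M] :
    Submodule K (↥(rightIdeal K e) ⊗[K] M) :=
  Submodule.span K {z : ↥(rightIdeal K e) ⊗[K] M |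
    ∃ (x y : ↥(rightIdeal K e)) (a : A) (m : M),
      (y : A) = (x : A) * a ∧ z = y ⊗ₜ[K] m - x ⊗ₜ[K] (a • m)}

/-- The `A`-balancing relations inside `eA ⊗_K S` for a `K`-submodule `S ≤ M`. -/
def brelSub (e : A) {M : Type u} [AddCommGroup M] [Module K M] [NUMod K A M]
    (S : Submodule K M) : Submodule K (↥(rightIdeal K e) ⊗[K] ↥S) :=
  Submodule.span K {z : ↥(rightIdeal K e) ⊗[K] ↥S |
    ∃ (x y : ↥(rightIdeal K e)) (a : A) (m m' : ↥S),
      (y : A) = (x : A) * a ∧ (m' : M) = a • (m : M) ∧ z = y ⊗ₜ[K] m - x ⊗ₜ[K] m'}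

variable (A)

/-- An idempotent `e` is left special if the class of non-degenerate modules `M` with
`M = AeM` is closed under subquotients: for `A`-stable submodules `Ksub ≤ H` of such an
`M`, the subquotient `H/Ksub` is again generated by its `e`-fixed vectors. -/
def LeftSpecial (e : A) : Prop :=
  ∀ (X : Type u) [AddCommGroup X] [Module K X] [NUMod K A X],
    Nondeg K A X → aeSpan K e X = ⊤ →
    ∀ Ksub H : Submodule K X, AStable K A Ksub → AStable K A H → Ksub ≤ H →
      H ≤ Ksub ⊔ Submodule.span K {x : X | ∃ a : A, ∃ m ∈ H, a • (e • m) = x}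

end Setup

section Corner

variable {K : Type u} [CommRing K]
variable {A : Type u} [NonUnitalRing A] [Module K A]
  [SMulCommClass K A A] [IsScalarTower K A A]

/-- The corner `eAe` of `A` at an idempotent `e`, as a non-unital subring of `A`
(it is in fact a unital ring with identity `e`). -/
def corner (e : A) (he : e * e = e) : NonUnitalSubring A where
  carrier := {x : A | e * x * e = x}
  zero_mem' := by simp
  add_mem' := by
    intro x y hx hy
    simp only [Set.mem_setOf_eq] at *
    rw [mul_add, add_mul, hx, hy]
  neg_mem' := by
    intro x hx
    simp only [Set.mem_setOf_eq] at *
    rw [mul_neg, neg_mul, hx]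
  mul_mem' := by
    intro x y hx hy
    simp only [Set.mem_setOf_eq] at *
    have hex : e * x = x := by
      conv_lhs => rw [← hx]
      rw [← mul_assoc, ← mul_assoc, he, hx]
    have hye : y * e = y := by
      conv_lhs => rw [← hy]
      rw [mul_assoc, mul_assoc, he, ← mul_assoc, hy]
    rw [← mul_assoc e x y, hex, mul_assoc, hye]

theorem e_mem_corner (e : A) (he : e * e = e) : e ∈ corner e he := by
  show e * e * e = e
  rw [he, he]

end Corner

section AeAux

namespace AeAux

variable {K A : Type u} [CommRing K] [NonUnitalRing A] [Module K A]
  [SMulCommClass K A A] [IsScalarTower K A A]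

variable (K)
theorem mem_L (e : A) (he : e * e = e) {x : A} (hx : x ∈ leftIdeal K e) :
    x * e = x := by
  obtain ⟨a, rfl⟩ := hx
  rw [mul_assoc, he]

/-- Left multiplication by `a` on `Ae`. -/
def lmulL (e : A) (a : A) : ↥(leftIdeal K e) →+ ↥(leftIdeal K e) where
  toFun x := ⟨a * x.1, by obtain ⟨b, hb⟩ := x.2; exact ⟨a * b, by rw [mul_assoc, hb]⟩⟩
  map_zero' := Subtype.ext (mul_zero a)
  map_add' x y := Subtype.ext (mul_add a x.1 y.1)

/-- `K`-scalar multiplication on `Ae`. -/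
def ksmL (e : A) (k : K) : ↥(leftIdeal K e) →+ ↥(leftIdeal K e) where
  toFun x := k • x
  map_zero' := smul_zero k
  map_add' := smul_add k

variable (e : A) (he : e * e = e) (V : Type u) [AddCommGroup V]

noncomputable def tmapV (φ : ↥(leftIdeal K e) →+ ↥(leftIdeal K e)) :
    (↥(leftIdeal K e) ⊗[ℤ] V) →ₗ[ℤ] (↥(leftIdeal K e) ⊗[ℤ] V) :=
  TensorProduct.map φ.toIntLinearMap LinearMap.id

variable (μ : ↥(corner e he) → V →+ V)

/-- The balancing relations. -/
def Rel : Submodule ℤ (↥(leftIdeal K e) ⊗[ℤ] V) :=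
  Submodule.span ℤ {z : ↥(leftIdeal K e) ⊗[ℤ] V |
    ∃ (x y : ↥(leftIdeal K e)) (c : ↥(corner e he)) (v : V),
      (y : A) = (x : A) * (c : A) ∧ z = y ⊗ₜ[ℤ] v - x ⊗ₜ[ℤ] (μ c v)}

/-- Compatibility of a map on `Ae` with right `eAe`-multiplication. -/
abbrev Compat (φ : ↥(leftIdeal K e) →+ ↥(leftIdeal K e)) : Prop :=
  ∀ (x y : ↥(leftIdeal K e)) (c : ↥(corner e he)),
    (y : A) = (x : A) * (c : A) → ((φ y : A)) = ((φ x : A)) * (c : A)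

theorem rel_le (φ : ↥(leftIdeal K e) →+ ↥(leftIdeal K e))
    (hφ : ∀ (x y : ↥(leftIdeal K e)) (c : ↥(corner e he)),
      (y : A) = (x : A) * (c : A) → ((φ y : A)) = ((φ x : A)) * (c : A)) :
    Rel K e he V μ ≤ (Rel K e he V μ).comap (tmapV K e V φ) := by
  rw [Rel, Submodule.span_le]
  rintro z ⟨x, y, c, v, hyx, rfl⟩
  simp only [SetLike.mem_coe, Submodule.mem_comap, map_sub]
  have h1 : tmapV K e V φ (y ⊗ₜ[ℤ] v) = (φ y) ⊗ₜ[ℤ] v := rfl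
  have h2 : tmapV K e V φ (x ⊗ₜ[ℤ] (μ c v)) = (φ x) ⊗ₜ[ℤ] (μ c v) := rfl
  rw [h1, h2]
  exact Submodule.subset_span ⟨φ x, φ y, c, v, hφ x y c hyx, rfl⟩

/-- Descent of an equivariant map on `Ae` to the quotient. -/
noncomputable def qmap (φ : ↥(leftIdeal K e) →+ ↥(leftIdeal K e))
    (hφ : ∀ (x y : ↥(leftIdeal K e)) (c : ↥(corner e he)),
      (y : A) = (x : A) * (c : A) → ((φ y : A)) = ((φ x : A)) * (c : A)) :
    ((↥(leftIdeal K e) ⊗[ℤ] V) ⧸ Rel K e he V μ) →ₗ[ℤ]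
      ((↥(leftIdeal K e) ⊗[ℤ] V) ⧸ Rel K e he V μ) :=
  Submodule.mapQ _ _ (tmapV K e V φ) (rel_le K e he V μ φ hφ)

theorem qmap_mk (φ) (hφ) (x : ↥(leftIdeal K e)) (v : V) :
    qmap K e he V μ φ hφ (Submodule.Quotient.mk (x ⊗ₜ[ℤ] v)) =
      Submodule.Quotient.mk ((φ x) ⊗ₜ[ℤ] v) := by
  rw [qmap, Submodule.mapQ_apply]
  rfl

theorem inductionOn {p : ((↥(leftIdeal K e) ⊗[ℤ] V) ⧸ Rel K e he V μ) → Prop}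
    (h0 : p 0)
    (ht : ∀ (x : ↥(leftIdeal K e)) (v : V), p (Submodule.Quotient.mk (x ⊗ₜ[ℤ] v)))
    (ha : ∀ m₁ m₂, p m₁ → p m₂ → p (m₁ + m₂)) : ∀ m, p m := by
  intro m
  obtain ⟨z, rfl⟩ := Submodule.Quotient.mk_surjective _ m
  induction z using TensorProduct.induction_on with
  | zero => exact h0
  | tmul x v => exact ht x v
  | add z₁ z₂ h₁ h₂ => rw [Submodule.Quotient.mk_add]; exact ha _ _ h₁ h₂

theorem lmulL_compat (a : A) : ∀ (x y : ↥(leftIdeal K e)) (c : ↥(corner e he)),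
    (y : A) = (x : A) * (c : A) →
    ((lmulL K e a y : A)) = ((lmulL K e a x : A)) * (c : A) := by
  intro x y c h
  show a * (y : A) = a * (x : A) * (c : A)
  rw [h, mul_assoc]

theorem ksmL_compat (k : K) : ∀ (x y : ↥(leftIdeal K e)) (c : ↥(corner e he)),
    (y : A) = (x : A) * (c : A) →
    ((ksmL K e k y : A)) = ((ksmL K e k x : A)) * (c : A) := by
  intro x y c h
  show (k • (y : A)) = (k • (x : A)) * (c : A)
  rw [h, smul_mul_assoc]

theorem corner_mem_e_mul (x : ↥(leftIdeal K e)) : e * (x : A) ∈ corner e he := by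
  show e * (e * (x : A)) * e = e * (x : A)
  rw [← mul_assoc, he, mul_assoc, mem_L K e he x.2]

/-- The retraction `Ae ⊗ V → V`, as a bilinear map. -/
noncomputable def piBil
    (h2 : ∀ (c c' : ↥(corner e he)) (v : V), μ (c + c') v = μ c v + μ c' v) :
    ↥(leftIdeal K e) →ₗ[ℤ] V →ₗ[ℤ] V :=
  AddMonoidHom.toIntLinearMap
  { toFun := fun x => (μ ⟨e * (x : A), corner_mem_e_mul K e he x⟩).toIntLinearMap
    map_zero' := by
      have hz : ∀ v : V, μ 0 v = 0 := by
        intro v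
        have := h2 0 0 v
        rw [add_zero] at this
        exact left_eq_add.mp this
      have hc : (⟨e * ((0 : ↥(leftIdeal K e)) : A), corner_mem_e_mul K e he 0⟩ :
          ↥(corner e he)) = 0 := Subtype.ext (by simp)
      rw [hc]
      ext v
      exact hz v
    map_add' := by
      intro x y
      have hc : (⟨e * ((x + y : ↥(leftIdeal K e)) : A), corner_mem_e_mul K e he (x + y)⟩ :
          ↥(corner e he)) =
          ⟨e * (x : A), corner_mem_e_mul K e he x⟩ + ⟨e * (y : A), corner_mem_e_mul K e he y⟩ :=
        Subtype.ext (by simp [mul_add])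
      rw [hc]
      ext v
      exact h2 _ _ v }

theorem piBil_rel_le
    (h1 : ∀ c c' : ↥(corner e he), μ (c * c') = (μ c).comp (μ c'))
    (h2 : ∀ (c c' : ↥(corner e he)) (v : V), μ (c + c') v = μ c v + μ c' v) :
    Rel K e he V μ ≤ LinearMap.ker
      (TensorProduct.lift (piBil K e he V μ h2)).toAddMonoidHom.toIntLinearMap := by
  rw [Rel, Submodule.span_le]
  rintro z ⟨x, y, c, v, hyx, rfl⟩
  simp only [SetLike.mem_coe, LinearMap.mem_ker, AddMonoidHom.coe_toIntLinearMap,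
    LinearMap.toAddMonoidHom_coe, map_sub, TensorProduct.lift.tmul]
  have hc : (⟨e * (y : A), corner_mem_e_mul K e he y⟩ : ↥(corner e he)) =
      ⟨e * (x : A), corner_mem_e_mul K e he x⟩ * c :=
    Subtype.ext (by show e * (y : A) = e * (x : A) * (c : A); rw [hyx, mul_assoc])
  show μ ⟨e * (y : A), _⟩ v - μ ⟨e * (x : A), _⟩ (μ c v) = 0
  rw [hc, h1]
  simp

/-- The retraction `(Ae ⊗ V)/Rel → V`. -/
noncomputable def piQ
    (h1 : ∀ c c' : ↥(corner e he), μ (c * c') = (μ c).comp (μ c'))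
    (h2 : ∀ (c c' : ↥(corner e he)) (v : V), μ (c + c') v = μ c v + μ c' v) :
    ((↥(leftIdeal K e) ⊗[ℤ] V) ⧸ Rel K e he V μ) →ₗ[ℤ] V :=
  Submodule.liftQ _ (TensorProduct.lift (piBil K e he V μ h2)).toAddMonoidHom.toIntLinearMap
    (piBil_rel_le K e he V μ h1 h2)

theorem piQ_mk (h1) (h2) (x : ↥(leftIdeal K e)) (v : V) :
    piQ K e he V μ h1 h2 (Submodule.Quotient.mk (x ⊗ₜ[ℤ] v)) =
      μ ⟨e * (x : A), corner_mem_e_mul K e he x⟩ v := by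
  rw [piQ, Submodule.liftQ_apply]
  rfl

theorem qmap_add (φ ψ χ : ↥(leftIdeal K e) →+ ↥(leftIdeal K e))
    (hφ : Compat K e he φ) (hψ : Compat K e he ψ) (hχ : Compat K e he χ)
    (h : ∀ x : ↥(leftIdeal K e), χ x = φ x + ψ x) :
    ∀ m, qmap K e he V μ χ hχ m = qmap K e he V μ φ hφ m + qmap K e he V μ ψ hψ m := by
  refine inductionOn K e he V μ ?_ ?_ ?_
  · simp
  · intro x v
    rw [qmap_mk, qmap_mk, qmap_mk, h x, TensorProduct.add_tmul, Submodule.Quotient.mk_add]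
  · intro m₁ m₂ h₁ h₂
    rw [map_add, map_add, map_add, h₁, h₂]
    abel

theorem qmap_comp (φ ψ χ : ↥(leftIdeal K e) →+ ↥(leftIdeal K e))
    (hφ : Compat K e he φ) (hψ : Compat K e he ψ) (hχ : Compat K e he χ)
    (h : ∀ x : ↥(leftIdeal K e), χ x = φ (ψ x)) :
    ∀ m, qmap K e he V μ χ hχ m = qmap K e he V μ φ hφ (qmap K e he V μ ψ hψ m) := by
  refine inductionOn K e he V μ ?_ ?_ ?_
  · simp
  · intro x v
    rw [qmap_mk, qmap_mk, qmap_mk, h x]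
  · intro m₁ m₂ h₁ h₂
    rw [map_add, map_add, map_add, h₁, h₂]

theorem qmap_comp₂ (φ ψ φ' ψ' : ↥(leftIdeal K e) →+ ↥(leftIdeal K e))
    (hφ : Compat K e he φ) (hψ : Compat K e he ψ) (hφ' : Compat K e he φ') (hψ' : Compat K e he ψ')
    (h : ∀ x : ↥(leftIdeal K e), φ (ψ x) = φ' (ψ' x)) :
    ∀ m, qmap K e he V μ φ hφ (qmap K e he V μ ψ hψ m) =
      qmap K e he V μ φ' hφ' (qmap K e he V μ ψ' hψ' m) := by
  refine inductionOn K e he V μ ?_ ?_ ?_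
  · simp
  · intro x v
    rw [qmap_mk, qmap_mk, qmap_mk, qmap_mk, h x]
  · intro m₁ m₂ h₁ h₂
    rw [map_add, map_add, map_add, map_add, h₁, h₂]

theorem qmap_id (φ : ↥(leftIdeal K e) →+ ↥(leftIdeal K e)) (hφ : Compat K e he φ)
    (h : ∀ x : ↥(leftIdeal K e), φ x = x) :
    ∀ m, qmap K e he V μ φ hφ m = m := by
  refine inductionOn K e he V μ ?_ ?_ ?_
  · simp
  · intro x v
    rw [qmap_mk, h x]
  · intro m₁ m₂ h₁ h₂
    rw [map_add, h₁, h₂]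

end AeAux

end AeAux
set_option maxHeartbeats 2000000 in
/-- for a left special idempotent `e` of an idempotented algebra `A`, the
right `eAe`-module `Ae` is flat: for every injective map `f : V → W` of (unital, left)
`eAe`-modules, the induced map `Ae ⊗_{eAe} V → Ae ⊗_{eAe} W` is injective.  The tensor
products over `eAe` are realized as quotients of tensor products of abelian groups by
the `eAe`-balancing relations. -/
theorem Ae_flat_over_corner
    {K A : Type u} [CommRing K] [NonUnitalRing A] [Module K A]
    [SMulCommClass K A A] [IsScalarTower K A A]
    (hA : Idempotented A) (e : A) (he : e * e = e) (hsp : LeftSpecial K A e)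
    (V W : Type u) [AddCommGroup V] [AddCommGroup W]
    -- V and W are unital left eAe-modules
    (μV : ↥(corner e he) → V →+ V) (μW : ↥(corner e he) → W →+ W)
    (hV1 : ∀ c c' : ↥(corner e he), μV (c * c') = (μV c).comp (μV c'))
    (hV2 : ∀ (c c' : ↥(corner e he)) (v : V), μV (c + c') v = μV c v + μV c' v)
    (hV3 : μV ⟨e, e_mem_corner e he⟩ = AddMonoidHom.id V)
    (hW1 : ∀ c c' : ↥(corner e he), μW (c * c') = (μW c).comp (μW c'))
    (hW2 : ∀ (c c' : ↥(corner e he)) (w : W), μW (c + c') w = μW c w + μW c' w)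
    (hW3 : μW ⟨e, e_mem_corner e he⟩ = AddMonoidHom.id W)
    -- f is an injective eAe-linear map
    (f : V →+ W) (hf : ∀ (c : ↥(corner e he)) (v : V), f (μV c v) = μW c (f v))
    (hfinj : Function.Injective f)
    -- Ae ⊗_{eAe} V and Ae ⊗_{eAe} W
    (RV : Submodule ℤ (↥(leftIdeal K e) ⊗[ℤ] V))
    (hRV : RV = Submodule.span ℤ {z : ↥(leftIdeal K e) ⊗[ℤ] V |
      ∃ (x y : ↥(leftIdeal K e)) (c : ↥(corner e he)) (v : V),
        (y : A) = (x : A) * (c : A) ∧ z = y ⊗ₜ[ℤ] v - x ⊗ₜ[ℤ] (μV c v)})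
    (RW : Submodule ℤ (↥(leftIdeal K e) ⊗[ℤ] W))
    (hRW : RW = Submodule.span ℤ {z : ↥(leftIdeal K e) ⊗[ℤ] W |
      ∃ (x y : ↥(leftIdeal K e)) (c : ↥(corner e he)) (w : W),
        (y : A) = (x : A) * (c : A) ∧ z = y ⊗ₜ[ℤ] w - x ⊗ₜ[ℤ] (μW c w)})
    -- the induced map
    (Ψ : ((↥(leftIdeal K e) ⊗[ℤ] V) ⧸ RV) →ₗ[ℤ] ((↥(leftIdeal K e) ⊗[ℤ] W) ⧸ RW))
    (hΨ : ∀ (x : ↥(leftIdeal K e)) (v : V),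
      Ψ (Submodule.Quotient.mk (x ⊗ₜ[ℤ] v)) = Submodule.Quotient.mk (x ⊗ₜ[ℤ] f v)) :
    Function.Injective Ψ := by
  classical
  have hRV' : RV = AeAux.Rel K e he V μV := hRV
  subst hRV'
  have hRW' : RW = AeAux.Rel K e he W μW := hRW
  subst hRW'
  have heL : e ∈ leftIdeal K e := ⟨e, he⟩
  -- scalar multiplications
  letI sV : SMul K ((↥(leftIdeal K e) ⊗[ℤ] V) ⧸ AeAux.Rel K e he V μV) :=
    ⟨fun k m => AeAux.qmap K e he V μV (AeAux.ksmL K e k) (AeAux.ksmL_compat K e he k) m⟩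
  letI sW : SMul K ((↥(leftIdeal K e) ⊗[ℤ] W) ⧸ AeAux.Rel K e he W μW) :=
    ⟨fun k m => AeAux.qmap K e he W μW (AeAux.ksmL K e k) (AeAux.ksmL_compat K e he k) m⟩
  letI mV : Module K ((↥(leftIdeal K e) ⊗[ℤ] V) ⧸ AeAux.Rel K e he V μV) :=
    Module.ofMinimalAxioms
      (fun k x y => map_add
        (AeAux.qmap K e he V μV (AeAux.ksmL K e k) (AeAux.ksmL_compat K e he k)) x y)
      (fun r s x => AeAux.qmap_add K e he V μV _ _ _ (AeAux.ksmL_compat K e he r)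
        (AeAux.ksmL_compat K e he s) (AeAux.ksmL_compat K e he (r + s))
        (fun z => add_smul r s z) x)
      (fun r s x => AeAux.qmap_comp K e he V μV _ _ _ (AeAux.ksmL_compat K e he r)
        (AeAux.ksmL_compat K e he s) (AeAux.ksmL_compat K e he (r * s))
        (fun z => mul_smul r s z) x)
      (fun x => AeAux.qmap_id K e he V μV _ (AeAux.ksmL_compat K e he 1)
        (fun z => one_smul K z) x)
  letI mW : Module K ((↥(leftIdeal K e) ⊗[ℤ] W) ⧸ AeAux.Rel K e he W μW) :=
    Module.ofMinimalAxioms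
      (fun k x y => map_add
        (AeAux.qmap K e he W μW (AeAux.ksmL K e k) (AeAux.ksmL_compat K e he k)) x y)
      (fun r s x => AeAux.qmap_add K e he W μW _ _ _ (AeAux.ksmL_compat K e he r)
        (AeAux.ksmL_compat K e he s) (AeAux.ksmL_compat K e he (r + s))
        (fun z => add_smul r s z) x)
      (fun r s x => AeAux.qmap_comp K e he W μW _ _ _ (AeAux.ksmL_compat K e he r)
        (AeAux.ksmL_compat K e he s) (AeAux.ksmL_compat K e he (r * s))
        (fun z => mul_smul r s z) x)
      (fun x => AeAux.qmap_id K e he W μW _ (AeAux.ksmL_compat K e he 1)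
        (fun z => one_smul K z) x)
  letI nV : NUMod K A ((↥(leftIdeal K e) ⊗[ℤ] V) ⧸ AeAux.Rel K e he V μV) :=
    { smul := fun a m =>
        AeAux.qmap K e he V μV (AeAux.lmulL K e a) (AeAux.lmulL_compat K e he a) m
      asmul_add := fun a m n => map_add
        (AeAux.qmap K e he V μV (AeAux.lmulL K e a) (AeAux.lmulL_compat K e he a)) m n
      add_asmul := fun a b m => AeAux.qmap_add K e he V μV _ _ _ (AeAux.lmulL_compat K e he a)
        (AeAux.lmulL_compat K e he b) (AeAux.lmulL_compat K e he (a + b))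
        (fun z => Subtype.ext (add_mul a b z.1)) m
      mul_asmul := fun a b m => AeAux.qmap_comp K e he V μV _ _ _ (AeAux.lmulL_compat K e he a)
        (AeAux.lmulL_compat K e he b) (AeAux.lmulL_compat K e he (a * b))
        (fun z => Subtype.ext (mul_assoc a b z.1)) m
      asmul_ksmul := fun k a m => AeAux.qmap_comp₂ K e he V μV _ _ _ _
        (AeAux.lmulL_compat K e he a) (AeAux.ksmL_compat K e he k)
        (AeAux.ksmL_compat K e he k) (AeAux.lmulL_compat K e he a)
        (fun z => Subtype.ext (mul_smul_comm k a z.1)) m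
      ksmul_asmul := fun k a m => AeAux.qmap_comp K e he V μV _ _ _
        (AeAux.ksmL_compat K e he k) (AeAux.lmulL_compat K e he a)
        (AeAux.lmulL_compat K e he (k • a))
        (fun z => Subtype.ext (smul_mul_assoc k a z.1)) m }
  letI nW : NUMod K A ((↥(leftIdeal K e) ⊗[ℤ] W) ⧸ AeAux.Rel K e he W μW) :=
    { smul := fun a m =>
        AeAux.qmap K e he W μW (AeAux.lmulL K e a) (AeAux.lmulL_compat K e he a) m
      asmul_add := fun a m n => map_add
        (AeAux.qmap K e he W μW (AeAux.lmulL K e a) (AeAux.lmulL_compat K e he a)) m n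
      add_asmul := fun a b m => AeAux.qmap_add K e he W μW _ _ _ (AeAux.lmulL_compat K e he a)
        (AeAux.lmulL_compat K e he b) (AeAux.lmulL_compat K e he (a + b))
        (fun z => Subtype.ext (add_mul a b z.1)) m
      mul_asmul := fun a b m => AeAux.qmap_comp K e he W μW _ _ _ (AeAux.lmulL_compat K e he a)
        (AeAux.lmulL_compat K e he b) (AeAux.lmulL_compat K e he (a * b))
        (fun z => Subtype.ext (mul_assoc a b z.1)) m
      asmul_ksmul := fun k a m => AeAux.qmap_comp₂ K e he W μW _ _ _ _
        (AeAux.lmulL_compat K e he a) (AeAux.ksmL_compat K e he k)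
        (AeAux.ksmL_compat K e he k) (AeAux.lmulL_compat K e he a)
        (fun z => Subtype.ext (mul_smul_comm k a z.1)) m
      ksmul_asmul := fun k a m => AeAux.qmap_comp K e he W μW _ _ _
        (AeAux.ksmL_compat K e he k) (AeAux.lmulL_compat K e he a)
        (AeAux.lmulL_compat K e he (k • a))
        (fun z => Subtype.ext (smul_mul_assoc k a z.1)) m }
  -- the A-action on pure tensors
  have asmul_mkV : ∀ (a : A) (x : ↥(leftIdeal K e)) (v : V),
      a • (Submodule.Quotient.mk (p := AeAux.Rel K e he V μV) (x ⊗ₜ[ℤ] v)) =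
        Submodule.Quotient.mk ((AeAux.lmulL K e a x) ⊗ₜ[ℤ] v) :=
    fun a x v => AeAux.qmap_mk K e he V μV _ _ x v
  have asmul_mkW : ∀ (a : A) (x : ↥(leftIdeal K e)) (w : W),
      a • (Submodule.Quotient.mk (p := AeAux.Rel K e he W μW) (x ⊗ₜ[ℤ] w)) =
        Submodule.Quotient.mk ((AeAux.lmulL K e a x) ⊗ₜ[ℤ] w) :=
    fun a x w => AeAux.qmap_mk K e he W μW _ _ x w
  have asmul_zeroV : ∀ a : A,
      a • (0 : (↥(leftIdeal K e) ⊗[ℤ] V) ⧸ AeAux.Rel K e he V μV) = 0 :=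
    fun a => map_zero
      (AeAux.qmap K e he V μV (AeAux.lmulL K e a) (AeAux.lmulL_compat K e he a))
  have asmul_zeroW : ∀ a : A,
      a • (0 : (↥(leftIdeal K e) ⊗[ℤ] W) ⧸ AeAux.Rel K e he W μW) = 0 :=
    fun a => map_zero
      (AeAux.qmap K e he W μW (AeAux.lmulL K e a) (AeAux.lmulL_compat K e he a))
  -- nondegeneracy
  have hndV : Nondeg K A ((↥(leftIdeal K e) ⊗[ℤ] V) ⧸ AeAux.Rel K e he V μV) := by
    refine AeAux.inductionOn K e he V μV ?_ ?_ ?_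
    · exact ⟨e, he, asmul_zeroV e⟩
    · intro x v
      obtain ⟨e', he', h1, _⟩ := hA.1 x.1
      refine ⟨e', he', ?_⟩
      rw [asmul_mkV]
      congr 1
      rw [show AeAux.lmulL K e e' x = x from Subtype.ext h1]
    · rintro m₁ m₂ ⟨e₁, he₁, h₁⟩ ⟨e₂, he₂, h₂⟩
      obtain ⟨e₃, he₃, h31, _, h32, _⟩ := hA.2 e₁ e₂ he₁ he₂
      refine ⟨e₃, he₃, ?_⟩
      have k₁ : e₃ • m₁ = m₁ := by
        conv_lhs => rw [← h₁]
        rw [← NUMod.mul_asmul (K := K), h31, h₁]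
      have k₂ : e₃ • m₂ = m₂ := by
        conv_lhs => rw [← h₂]
        rw [← NUMod.mul_asmul (K := K), h32, h₂]
      rw [NUMod.asmul_add (K := K), k₁, k₂]
  -- AeM = M
  have htopV : aeSpan K e ((↥(leftIdeal K e) ⊗[ℤ] V) ⧸ AeAux.Rel K e he V μV) = ⊤ := by
    rw [eq_top_iff]
    intro m _
    refine AeAux.inductionOn K e he V μV
      (p := fun m => m ∈ aeSpan K e ((↥(leftIdeal K e) ⊗[ℤ] V) ⧸ AeAux.Rel K e he V μV))
      ?_ ?_ ?_ m
    · exact zero_mem _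
    · intro x v
      refine Submodule.subset_span
        ⟨x.1, Submodule.Quotient.mk ((⟨e, heL⟩ : ↥(leftIdeal K e)) ⊗ₜ[ℤ] v), ?_⟩
      rw [asmul_mkV, asmul_mkV]
      congr 1
      rw [show AeAux.lmulL K e x.1 (AeAux.lmulL K e e ⟨e, heL⟩) = x from
        Subtype.ext (by
          show x.1 * (e * e) = x.1
          rw [he, AeAux.mem_L K e he x.2])]
    · intro m₁ m₂ h₁ h₂
      exact add_mem h₁ h₂
  -- equivariance of Ψ
  have hΨA : ∀ (a : A) m, Ψ (a • m) = a • Ψ m := by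
    intro a
    refine AeAux.inductionOn K e he V μV ?_ ?_ ?_
    · rw [asmul_zeroV, map_zero, asmul_zeroW]
    · intro x v
      rw [asmul_mkV, hΨ, hΨ, asmul_mkW]
    · intro m₁ m₂ h₁ h₂
      have e₁ : a • (m₁ + m₂) = a • m₁ + a • m₂ := map_add
        (AeAux.qmap K e he V μV (AeAux.lmulL K e a) (AeAux.lmulL_compat K e he a)) m₁ m₂
      have e₂ : a • (Ψ m₁ + Ψ m₂) = a • Ψ m₁ + a • Ψ m₂ := map_add
        (AeAux.qmap K e he W μW (AeAux.lmulL K e a) (AeAux.lmulL_compat K e he a)) _ _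
      rw [e₁, map_add, map_add, h₁, h₂, e₂]
  have hΨK : ∀ (k : K) m, Ψ (k • m) = k • Ψ m := by
    intro k
    refine AeAux.inductionOn K e he V μV ?_ ?_ ?_
    · have z₁ : k • (0 : (↥(leftIdeal K e) ⊗[ℤ] V) ⧸ AeAux.Rel K e he V μV) = 0 :=
        map_zero (AeAux.qmap K e he V μV (AeAux.ksmL K e k) (AeAux.ksmL_compat K e he k))
      have z₂ : k • (0 : (↥(leftIdeal K e) ⊗[ℤ] W) ⧸ AeAux.Rel K e he W μW) = 0 :=
        map_zero (AeAux.qmap K e he W μW (AeAux.ksmL K e k) (AeAux.ksmL_compat K e he k))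
      rw [z₁, map_zero, z₂]
    · intro x v
      have e₁ : k • (Submodule.Quotient.mk (p := AeAux.Rel K e he V μV) (x ⊗ₜ[ℤ] v)) =
          Submodule.Quotient.mk ((AeAux.ksmL K e k x) ⊗ₜ[ℤ] v) :=
        AeAux.qmap_mk K e he V μV _ _ x v
      have e₂ : k • (Submodule.Quotient.mk (p := AeAux.Rel K e he W μW) (x ⊗ₜ[ℤ] (f v))) =
          Submodule.Quotient.mk ((AeAux.ksmL K e k x) ⊗ₜ[ℤ] (f v)) :=
        AeAux.qmap_mk K e he W μW _ _ x (f v)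
      rw [e₁, hΨ, hΨ, e₂]
    · intro m₁ m₂ h₁ h₂
      have e₁ : k • (m₁ + m₂) = k • m₁ + k • m₂ := map_add
        (AeAux.qmap K e he V μV (AeAux.ksmL K e k) (AeAux.ksmL_compat K e he k)) m₁ m₂
      have e₂ : k • (Ψ m₁ + Ψ m₂) = k • Ψ m₁ + k • Ψ m₂ := map_add
        (AeAux.qmap K e he W μW (AeAux.ksmL K e k) (AeAux.ksmL_compat K e he k)) _ _
      rw [e₁, map_add, map_add, h₁, h₂, e₂]
  -- the kernel of Ψ
  let H : Submodule K ((↥(leftIdeal K e) ⊗[ℤ] V) ⧸ AeAux.Rel K e he V μV) :=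
    { carrier := {m | Ψ m = 0}
      add_mem' := fun {m₁ m₂} h₁ h₂ => by
        have h₁' : Ψ m₁ = 0 := h₁
        have h₂' : Ψ m₂ = 0 := h₂
        show Ψ (m₁ + m₂) = 0
        rw [map_add, h₁', h₂', add_zero]
      zero_mem' := map_zero Ψ
      smul_mem' := fun k m hm => by
        have hm' : Ψ m = 0 := hm
        show Ψ (k • m) = 0
        rw [hΨK k m, hm']
        exact map_zero
          (AeAux.qmap K e he W μW (AeAux.ksmL K e k) (AeAux.ksmL_compat K e he k)) }
  have hHst : AStable K A H := by
    intro a m hm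
    have hm' : Ψ m = 0 := hm
    show Ψ (a • m) = 0
    rw [hΨA a m, hm', asmul_zeroW]
  have hbotst : AStable K A (⊥ : Submodule K ((↥(leftIdeal K e) ⊗[ℤ] V) ⧸ AeAux.Rel K e he V μV)) := by
    intro a m hm
    rw [Submodule.mem_bot] at hm ⊢
    rw [hm, asmul_zeroV]
  -- the retractions
  have hπ : ∀ m, f (AeAux.piQ K e he V μV hV1 hV2 m) = AeAux.piQ K e he W μW hW1 hW2 (Ψ m) := by
    refine AeAux.inductionOn K e he V μV ?_ ?_ ?_
    · rw [map_zero, map_zero, map_zero, map_zero]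
    · intro x v
      rw [AeAux.piQ_mk, hΨ, AeAux.piQ_mk]
      exact hf _ v
    · intro m₁ m₂ h₁ h₂
      rw [map_add, map_add, map_add, map_add, h₁, h₂]
  have hem : ∀ m, e • m = Submodule.Quotient.mk
      ((⟨e, heL⟩ : ↥(leftIdeal K e)) ⊗ₜ[ℤ] (AeAux.piQ K e he V μV hV1 hV2 m)) := by
    refine AeAux.inductionOn K e he V μV ?_ ?_ ?_
    · rw [asmul_zeroV, map_zero, TensorProduct.tmul_zero, Submodule.Quotient.mk_zero]
    · intro x v
      rw [asmul_mkV, AeAux.piQ_mk, Submodule.Quotient.eq]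
      refine Submodule.subset_span
        ⟨⟨e, heL⟩, AeAux.lmulL K e e x, ⟨e * x.1, AeAux.corner_mem_e_mul K e he x⟩, v, ?_, rfl⟩
      show e * x.1 = e * (e * x.1)
      rw [← mul_assoc, he]
    · intro m₁ m₂ h₁ h₂
      have e₁ : e • (m₁ + m₂) = e • m₁ + e • m₂ := map_add
        (AeAux.qmap K e he V μV (AeAux.lmulL K e e) (AeAux.lmulL_compat K e he e)) m₁ m₂
      rw [e₁, map_add, TensorProduct.tmul_add, Submodule.Quotient.mk_add, h₁, h₂]
  have hπe : ∀ w : W, AeAux.piQ K e he W μW hW1 hW2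
      (Submodule.Quotient.mk ((⟨e, heL⟩ : ↥(leftIdeal K e)) ⊗ₜ[ℤ] w)) = w := by
    intro w
    rw [AeAux.piQ_mk]
    have hc : (⟨e * ((⟨e, heL⟩ : ↥(leftIdeal K e)) : A),
        AeAux.corner_mem_e_mul K e he ⟨e, heL⟩⟩ : ↥(corner e he)) =
        ⟨e, e_mem_corner e he⟩ := Subtype.ext he
    rw [hc, hW3]
    rfl
  -- elements of the kernel are killed by e
  have hker : ∀ m, Ψ m = 0 → e • m = 0 := by
    intro m hm
    have h1 : f (AeAux.piQ K e he V μV hV1 hV2 m) = 0 := by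
      rw [hπ m, hm, map_zero]
    have h2 : AeAux.piQ K e he V μV hV1 hV2 m = 0 := by
      apply hfinj
      rw [h1, map_zero]
    rw [hem m, h2, TensorProduct.tmul_zero, Submodule.Quotient.mk_zero]
  -- apply left specialness
  have hmain := hsp ((↥(leftIdeal K e) ⊗[ℤ] V) ⧸ AeAux.Rel K e he V μV)
    hndV htopV ⊥ H hbotst hHst bot_le
  have hspan : Submodule.span K {x : (↥(leftIdeal K e) ⊗[ℤ] V) ⧸ AeAux.Rel K e he V μV |
      ∃ a : A, ∃ m ∈ H, a • (e • m) = x} ≤ ⊥ := by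
    rw [Submodule.span_le]
    rintro x ⟨a, m, hm, rfl⟩
    have hm' : Ψ m = 0 := hm
    rw [hker m hm', asmul_zeroV]
    exact Submodule.zero_mem ⊥
  have hH : H ≤ ⊥ := le_trans hmain (sup_le le_rfl hspan)
  intro m₁ m₂ hmm
  have h0 : Ψ (m₁ - m₂) = 0 := by rw [map_sub, hmm, sub_self]
  have h1 : m₁ - m₂ ∈ H := h0
  have h2 := hH h1
  rw [Submodule.mem_bot] at h2
  exact sub_eq_zero.mp h2
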